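/- arXiv:2105.11434 — 2 statements merged into one kernel-verified Lean document; each statement's English description precedes it below -/
import Mathlib

section
/- Let V be a type, E : V → V → Prop a directed graph, and F : V → V → Prop a subrelation of E (the forest edges, directed from parent to child) such that: (i) every vertex has at most one F-parent (F u v and F u' v imply u = u'), and (ii) the ancestor relation A = Relation.ReflTransGen F is antisymmetric. Call a pair (a,b) with E a b and ¬F a b a surplus edge. Suppose E v w, suppose w leads to v in E, and suppose v is not an F-descendant of w (¬A w v). Then there exist vertices a, b with: w leads to a, E a b and ¬F a b (so (a,b) is a surplus edge), b leads to v, and a is an F-descendant of w (A w a). In particular (a,b) lies on a directed cycle through v and w, hence in the same strongly connected component. (This is the abstract form of Lemma 'whatispartofscc', parts 3 and 4: a forest edge, or a non-ancestral surplus edge, is part of an SCC only if its head is an ancestor of the tail of a surplus edge that is part of that SCC.) -/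
/-- `x` leads to `y` in the digraph `E`: there is a directed path from `x` to `y`. -/
def Leads {V : Type*} (E : V → V → Prop) (x y : V) : Prop :=
  Relation.ReflTransGen E x y

/-- Abstract form of Lemma `whatispartofscc`, parts 3 and 4.  Let `F ≤ E` be a spanning
forest (every vertex has at most one `F`-parent and the ancestor relation
`A = Relation.ReflTransGen F` is antisymmetric).  If `E v w`, `w` leads to `v` in `E`,
and `v` is not an `F`-descendant of `w`, then there is a surplus edge `(a, b)`
(i.e. `E a b` but not `F a b`) with `w ⇝ a`, `b ⇝ v`, and `a` an `F`-descendant of `w`. -/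
theorem edge_in_scc_head_ancestor_of_surplus_tail {V : Type*} (E F : V → V → Prop)
    (hFE : ∀ u v, F u v → E u v)
    (hparent : ∀ u u' v, F u v → F u' v → u = u')
    (hanti : ∀ u v, Relation.ReflTransGen F u v → Relation.ReflTransGen F v u → u = v)
    (v w : V) (hvw : E v w) (hlead : Leads E w v)
    (hnotdesc : ¬ Relation.ReflTransGen F w v) :
    ∃ a b : V, Leads E w a ∧ E a b ∧ ¬ F a b ∧ Leads E b v ∧
      Relation.ReflTransGen F w a := by
  have key : ∀ x : V, Leads E x v → Relation.ReflTransGen F w x →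
      ∃ a b : V, Leads E w a ∧ E a b ∧ ¬ F a b ∧ Leads E b v ∧
        Relation.ReflTransGen F w a := by
    intro x hx
    induction hx using Relation.ReflTransGen.head_induction_on with
    | refl => intro hwv; exact absurd hwv hnotdesc
    | head hxy hyv ih =>
      rename_i x y
      intro hwx
      by_cases hF : F x y
      · exact ih (hwx.tail hF)
      · exact ⟨x, y, Relation.ReflTransGen.mono (r := F) (fun _ _ h => hFE _ _ h) w x hwx, hxy, hF, hyv, hwx⟩
  exact key w hlead Relation.ReflTransGen.refl
end

section
/- Let S be a metric space and, for each n ≥ 1, let (X_n, Y_n, Z_n) be a random variable with values in [0,∞) × [0,∞) × S. Suppose there exists a [0,∞) × S-valued random variable (Y, Z) such that: (1) (Y_n, Z_n) converges in distribution to (Y, Z); (2) X_n ≥ Y_n almost surely for all n; (3) E[X_n] = 1 for all n and E[Y] = 1. Then (X_n, Z_n) converges in distribution to (Y, Z), and moreover (X_n)_{n≥1} is uniformly integrable: lim_{L→∞} sup_n E[X_n 1{X_n > L}] = 0. -/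
open MeasureTheory Filter Topology ENNReal NNReal

noncomputable def truncBCF {S : Type*} [MetricSpace S] (c : ℝ) :
    BoundedContinuousFunction (ℝ × S) ℝ :=
  BoundedContinuousFunction.mkOfBound
    ⟨fun p => min (max p.1 0) c, by
      exact (continuous_fst.max continuous_const).min continuous_const⟩ (2 * |c|)
    (by
      intro x y
      have key : ∀ z : ℝ, |min (max z 0) c| ≤ |c| := by
        intro z
        rw [abs_le]
        constructor
        · exact le_min (le_trans (neg_nonpos.mpr (abs_nonneg c)) (le_max_right z 0))
            (neg_abs_le c)
        · exact le_trans (min_le_right _ _) (le_abs_self c)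
      calc dist (min (max x.1 0) c) (min (max y.1 0) c)
          = ‖min (max x.1 0) c - min (max y.1 0) c‖ := dist_eq_norm _ _
        _ ≤ ‖min (max x.1 0) c‖ + ‖min (max y.1 0) c‖ := norm_sub_le _ _
        _ ≤ 2 * |c| := by
            have h1 := key x.1
            have h2 := key y.1
            simp only [Real.norm_eq_abs]
            linarith)

@[simp] lemma truncBCF_apply {S : Type*} [MetricSpace S] (c : ℝ) (p : ℝ × S) :
    truncBCF c p = min (max p.1 0) c := rfl

lemma bcf_comp_integrable {α β : Type*} [MeasurableSpace α] [TopologicalSpace β]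
    [MeasurableSpace β] [OpensMeasurableSpace β] (μ : Measure α)
    [IsFiniteMeasure μ] (g : BoundedContinuousFunction β ℝ) {f : α → β}
    (hf : Measurable f) : Integrable (fun a => g (f a)) μ :=
  Integrable.mono' (integrable_const ‖g‖)
    ((g.continuous.measurable.comp hf).aestronglyMeasurable)
    (Filter.Eventually.of_forall fun a => g.norm_coe_le_norm (f a))

/-- Lemma `sandwiching-lemma`: let `(Xₙ, Yₙ, Zₙ)` take values in `[0,∞) × [0,∞) × S`.
If `(Yₙ, Zₙ) ⇒ (Y, Z)`, `Xₙ ≥ Yₙ` a.s., `E[Xₙ] = 1` for all `n` and `E[Y] = 1`, then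
`(Xₙ, Zₙ) ⇒ (Y, Z)` and `(Xₙ)` is uniformly integrable. -/
theorem sandwiching_lemma {S : Type*} [MetricSpace S] [MeasurableSpace S]
    [OpensMeasurableSpace S]
    {Ω : ℕ → Type*} [∀ n, MeasurableSpace (Ω n)]
    (P : ∀ n, Measure (Ω n)) [∀ n, IsProbabilityMeasure (P n)]
    (X : ∀ n, Ω n → ℝ) (Y : ∀ n, Ω n → ℝ) (Z : ∀ n, Ω n → S)
    (hXmeas : ∀ n, Measurable (X n)) (hYmeas : ∀ n, Measurable (Y n))
    (hZmeas : ∀ n, Measurable (Z n))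
    (hXnn : ∀ n, ∀ᵐ ω ∂(P n), 0 ≤ X n ω) (hYnn : ∀ n, ∀ᵐ ω ∂(P n), 0 ≤ Y n ω)
    {Ω' : Type*} [MeasurableSpace Ω'] (Q : Measure Ω') [IsProbabilityMeasure Q]
    (Y' : Ω' → ℝ) (Z' : Ω' → S)
    (hY'meas : Measurable Y') (hZ'meas : Measurable Z')
    (hY'nn : ∀ᵐ ω ∂Q, 0 ≤ Y' ω)
    (hXint : ∀ n, Integrable (X n) (P n)) (hY'int : Integrable Y' Q)
    -- (1) `(Yₙ, Zₙ)` converges in distribution to `(Y, Z)`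
    (hdistYZ : ∀ g : BoundedContinuousFunction (ℝ × S) ℝ,
      Tendsto (fun n => ∫ ω, g (Y n ω, Z n ω) ∂(P n)) atTop
        (𝓝 (∫ ω, g (Y' ω, Z' ω) ∂Q)))
    -- (2) `Xₙ ≥ Yₙ` almost surely
    (hsand : ∀ n, ∀ᵐ ω ∂(P n), Y n ω ≤ X n ω)
    -- (3) `E[Xₙ] = 1` and `E[Y] = 1`
    (hXmean : ∀ n, (∫ ω, X n ω ∂(P n)) = 1) (hY'mean : (∫ ω, Y' ω ∂Q) = 1) :
    (∀ g : BoundedContinuousFunction (ℝ × S) ℝ,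
      Tendsto (fun n => ∫ ω, g (X n ω, Z n ω) ∂(P n)) atTop
        (𝓝 (∫ ω, g (Y' ω, Z' ω) ∂Q))) ∧
    (∀ ε : ℝ, 0 < ε → ∃ L : ℝ, ∀ n,
      (∫ ω in {ω | L < X n ω}, X n ω ∂(P n)) < ε) := by
  -- measurability of the pair maps
  have hXZm : ∀ n, Measurable fun ω => (X n ω, Z n ω) := fun n => (hXmeas n).prodMk (hZmeas n)
  have hYZm : ∀ n, Measurable fun ω => (Y n ω, Z n ω) := fun n => (hYmeas n).prodMk (hZmeas n)
  have hY'Z'm : Measurable fun ω => (Y' ω, Z' ω) := hY'meas.prodMk hZ'meas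
  -- integrability of Y n
  have hYint : ∀ n, Integrable (Y n) (P n) := by
    intro n
    refine (hXint n).mono' (hYmeas n).aestronglyMeasurable ?_
    filter_upwards [hYnn n, hsand n] with ω h1 h2
    rw [Real.norm_eq_abs, abs_of_nonneg h1]
    exact h2
  have hEYle : ∀ n, (∫ ω, Y n ω ∂(P n)) ≤ 1 := by
    intro n
    rw [← hXmean n]
    exact integral_mono_ae (hYint n) (hXint n) (hsand n)
  -- truncation integrals
  have htruncint : ∀ (n : ℕ) (c : ℝ), Integrable (fun ω => min (max (Y n ω) 0) c) (P n) := by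
    intro n c
    have := bcf_comp_integrable (P n) (truncBCF (S := S) c) (hYZm n)
    simpa using this
  have htruncint' : ∀ c : ℝ, Integrable (fun ω => min (max (Y' ω) 0) c) Q := by
    intro c
    have := bcf_comp_integrable Q (truncBCF (S := S) c) hY'Z'm
    simpa using this
  have htrunc_le : ∀ (n : ℕ) (c : ℝ),
      (∫ ω, min (max (Y n ω) 0) c ∂(P n)) ≤ ∫ ω, Y n ω ∂(P n) := by
    intro n c
    refine integral_mono_ae (htruncint n c) (hYint n) ?_
    filter_upwards [hYnn n] with ω h
    rw [max_eq_left h]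
    exact min_le_left _ _
  -- convergence of truncated integrals along n
  have hTk : ∀ k : ℕ, Tendsto (fun n => ∫ ω, min (max (Y n ω) 0) (k : ℝ) ∂(P n)) atTop
      (𝓝 (∫ ω, min (max (Y' ω) 0) (k : ℝ) ∂Q)) := by
    intro k
    have := hdistYZ (truncBCF (k : ℝ))
    simpa using this
  -- T k → 1
  have hT : Tendsto (fun k : ℕ => ∫ ω, min (max (Y' ω) 0) (k : ℝ) ∂Q) atTop (𝓝 1) := by
    have h1 : Tendsto (fun k : ℕ => ∫ ω, min (max (Y' ω) 0) (k : ℝ) ∂Q) atTop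
        (𝓝 (∫ ω, max (Y' ω) 0 ∂Q)) := by
      apply integral_tendsto_of_tendsto_of_monotone (fun k => htruncint' (k : ℝ)) hY'int.pos_part
      · exact Filter.Eventually.of_forall fun ω i j hij =>
          min_le_min le_rfl (Nat.cast_le.mpr hij)
      · refine Filter.Eventually.of_forall fun ω => ?_
        apply tendsto_atTop_of_eventually_const (i₀ := ⌈max (Y' ω) 0⌉₊)
        intro k hk
        exact min_eq_left ((Nat.le_ceil _).trans (Nat.cast_le.mpr hk))
    have h2 : (∫ ω, max (Y' ω) 0 ∂Q) = 1 := by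
      rw [← hY'mean]
      apply integral_congr_ae
      filter_upwards [hY'nn] with ω h using max_eq_left h
    rwa [h2] at h1
  -- E[Y n] → 1
  have hEY1 : Tendsto (fun n => ∫ ω, Y n ω ∂(P n)) atTop (𝓝 1) := by
    rw [Metric.tendsto_atTop]
    intro ε εpos
    obtain ⟨k, hk⟩ := (Metric.tendsto_atTop.mp hT (ε / 2) (by linarith))
    have hk' := hk k le_rfl
    obtain ⟨N, hN⟩ := Metric.tendsto_atTop.mp (hTk k) (ε / 2) (by linarith)
    refine ⟨N, fun n hn => ?_⟩
    have h1 := hN n hn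
    rw [Real.dist_eq, abs_lt] at h1 hk' ⊢
    have h2 := htrunc_le n (k : ℝ)
    have h3 := hEYle n
    constructor <;> nlinarith
  have hεtend : Tendsto (fun n => 1 - ∫ ω, Y n ω ∂(P n)) atTop (𝓝 0) := by
    have : Tendsto (fun n : ℕ => (1:ℝ) - ∫ ω, Y n ω ∂(P n)) atTop (𝓝 (1 - 1)) :=
      tendsto_const_nhds.sub hEY1
    simpa using this
  have hDmean : ∀ n, (∫ ω, (X n ω - Y n ω) ∂(P n)) = 1 - ∫ ω, Y n ω ∂(P n) := by
    intro n
    rw [integral_sub (hXint n) (hYint n), hXmean n]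
  -- the probability measures on ℝ × S
  let μs : ℕ → ProbabilityMeasure (ℝ × S) := fun n =>
    ⟨(P n).map (fun ω => (X n ω, Z n ω)), Measure.isProbabilityMeasure_map (hXZm n).aemeasurable⟩
  let νs : ℕ → ProbabilityMeasure (ℝ × S) := fun n =>
    ⟨(P n).map (fun ω => (Y n ω, Z n ω)), Measure.isProbabilityMeasure_map (hYZm n).aemeasurable⟩
  let ν0 : ProbabilityMeasure (ℝ × S) :=
    ⟨Q.map (fun ω => (Y' ω, Z' ω)), Measure.isProbabilityMeasure_map hY'Z'm.aemeasurable⟩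
  have hmapμ : ∀ (g : BoundedContinuousFunction (ℝ × S) ℝ) n,
      (∫ p, g p ∂((μs n : Measure (ℝ × S)))) = ∫ ω, g (X n ω, Z n ω) ∂(P n) := fun g n =>
    integral_map (hXZm n).aemeasurable g.continuous.measurable.aestronglyMeasurable
  have hmapν : ∀ (g : BoundedContinuousFunction (ℝ × S) ℝ) n,
      (∫ p, g p ∂((νs n : Measure (ℝ × S)))) = ∫ ω, g (Y n ω, Z n ω) ∂(P n) := fun g n =>
    integral_map (hYZm n).aemeasurable g.continuous.measurable.aestronglyMeasurable
  have hmapν0 : ∀ (g : BoundedContinuousFunction (ℝ × S) ℝ),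
      (∫ p, g p ∂((ν0 : Measure (ℝ × S)))) = ∫ ω, g (Y' ω, Z' ω) ∂Q := fun g =>
    integral_map hY'Z'm.aemeasurable g.continuous.measurable.aestronglyMeasurable
  have hνtend : Tendsto νs atTop (𝓝 ν0) := by
    rw [ProbabilityMeasure.tendsto_iff_forall_integral_tendsto]
    intro g
    simp only [hmapν, hmapν0]
    exact hdistYZ g
  -- the key open-sets liminf estimate, in ℝ≥0∞
  have h_opens : ∀ G : Set (ℝ × S), IsOpen G →
      (ν0 : Measure (ℝ × S)) G ≤ atTop.liminf (fun n => (μs n : Measure (ℝ × S)) G) := by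
    intro G hG
    set Gd : ℕ → Set (ℝ × S) :=
      fun k => {p | ENNReal.ofReal (1 / (k + 1) : ℝ) < EMetric.infEdist p Gᶜ} with hGdDef
    have hGdopen : ∀ k, IsOpen (Gd k) := by
      intro k
      have : Gd k = (Metric.cthickening (1 / (k + 1) : ℝ) Gᶜ)ᶜ := by
        ext p
        simp [hGdDef, Metric.cthickening, not_le]
        exact Iff.rfl
      rw [this]
      exact (Metric.isClosed_cthickening).isOpen_compl
    have hGdmono : Monotone Gd := by
      intro i j hij p hp
      simp only [hGdDef, Set.mem_setOf_eq] at hp ⊢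
      refine lt_of_le_of_lt ?_ hp
      apply ENNReal.ofReal_le_ofReal
      apply one_div_le_one_div_of_le (by positivity)
      have : (i : ℝ) ≤ (j : ℝ) := Nat.cast_le.mpr hij
      linarith
    have hGdUnion : (⋃ k, Gd k) = G := by
      ext p
      simp only [Set.mem_iUnion, hGdDef, Set.mem_setOf_eq]
      constructor
      · rintro ⟨k, hk⟩
        by_contra hpG
        have h0 : EMetric.infEdist p Gᶜ = 0 := EMetric.infEdist_zero_of_mem hpG
        rw [h0] at hk
        exact absurd hk (by simp)
      · intro hpG
        have hpos : 0 < EMetric.infEdist p Gᶜ := by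
          show 0 < Metric.infEDist p Gᶜ
          rw [EMetric.infEdist_pos_iff_notMem_closure, hG.isClosed_compl.closure_eq]
          simpa using hpG
        rcases eq_top_or_lt_top (EMetric.infEdist p Gᶜ) with htop | hlt
        · exact ⟨0, by rw [htop]; exact ENNReal.ofReal_lt_top⟩
        · have htr : 0 < (EMetric.infEdist p Gᶜ).toReal :=
            ENNReal.toReal_pos hpos.ne' hlt.ne
          obtain ⟨k, hk⟩ := exists_nat_one_div_lt htr
          refine ⟨k, ?_⟩
          calc ENNReal.ofReal (1 / (k + 1) : ℝ)
              < ENNReal.ofReal ((EMetric.infEdist p Gᶜ).toReal) :=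
                (ENNReal.ofReal_lt_ofReal_iff htr).mpr hk
            _ = EMetric.infEdist p Gᶜ := ENNReal.ofReal_toReal hlt.ne
    have key : ∀ k : ℕ,
        (ν0 : Measure (ℝ × S)) (Gd k) ≤ atTop.liminf (fun n => (μs n : Measure (ℝ × S)) G) := by
      intro k
      set δ : ℝ := 1 / (k + 1) with hδDef
      have δpos : (0 : ℝ) < δ := by positivity
      have h1 : (ν0 : Measure (ℝ × S)) (Gd k) ≤
          atTop.liminf (fun n => (νs n : Measure (ℝ × S)) (Gd k)) :=
        ProbabilityMeasure.le_liminf_measure_open_of_tendsto hνtend (hGdopen k)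
      have h2 : ∀ n, (νs n : Measure (ℝ × S)) (Gd k) ≤
          (μs n : Measure (ℝ × S)) G
            + ENNReal.ofReal ((1 - ∫ ω, Y n ω ∂(P n)) / δ) := by
        intro n
        have hA : (νs n : Measure (ℝ × S)) (Gd k)
            = P n ((fun ω => (Y n ω, Z n ω)) ⁻¹' (Gd k)) :=
          Measure.map_apply (hYZm n) (hGdopen k).measurableSet
        have hB : (μs n : Measure (ℝ × S)) G
            = P n ((fun ω => (X n ω, Z n ω)) ⁻¹' G) :=
          Measure.map_apply (hXZm n) hG.measurableSet
        rw [hA, hB]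
        have hsub : ∀ᵐ ω ∂(P n), ω ∈ ((fun ω => (Y n ω, Z n ω)) ⁻¹' (Gd k)) →
            ω ∈ ((((fun ω => (X n ω, Z n ω)) ⁻¹' G) ∪ {ω | δ < X n ω - Y n ω}) : Set (Ω n)) := by
          filter_upwards [hsand n] with ω hle
          intro hmem
          rw [Set.mem_union]
          by_cases hd : δ < X n ω - Y n ω
          · exact Or.inr hd
          · push_neg at hd
            left
            show (X n ω, Z n ω) ∈ G
            by_contra hnG
            have hGc : (X n ω, Z n ω) ∈ Gᶜ := hnG
            have hinf : EMetric.infEdist (Y n ω, Z n ω) Gᶜ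
                ≤ edist ((Y n ω, Z n ω) : ℝ × S) (X n ω, Z n ω) :=
              EMetric.infEdist_le_edist_of_mem hGc
            have hed : edist ((Y n ω, Z n ω) : ℝ × S) (X n ω, Z n ω)
                ≤ ENNReal.ofReal δ := by
              rw [edist_dist]
              apply ENNReal.ofReal_le_ofReal
              rw [Prod.dist_eq]
              have hZ : dist (Z n ω) (Z n ω) = 0 := dist_self _
              rw [hZ]
              have hdist : dist (Y n ω) (X n ω) ≤ δ := by
                rw [Real.dist_eq, abs_of_nonpos (by linarith)]
                linarith
              exact max_le hdist δpos.le
            have : EMetric.infEdist (Y n ω, Z n ω) Gᶜ ≤ ENNReal.ofReal δ :=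
              le_trans hinf hed
            have hmem' : ENNReal.ofReal δ < EMetric.infEdist ((Y n ω, Z n ω) : ℝ × S) Gᶜ := hmem
            exact absurd hmem' (not_lt.mpr this)
        calc P n ((fun ω => (Y n ω, Z n ω)) ⁻¹' (Gd k))
            ≤ P n ((((fun ω => (X n ω, Z n ω)) ⁻¹' G) ∪ {ω | δ < X n ω - Y n ω})) :=
              measure_mono_ae hsub
          _ ≤ P n ((fun ω => (X n ω, Z n ω)) ⁻¹' G) + P n {ω | δ < X n ω - Y n ω} :=
              measure_union_le _ _
          _ ≤ P n ((fun ω => (X n ω, Z n ω)) ⁻¹' G)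
              + ENNReal.ofReal ((1 - ∫ ω, Y n ω ∂(P n)) / δ) := by
              gcongr
              have hDnn : (0 : Ω n → ℝ) ≤ᵐ[P n] fun ω => X n ω - Y n ω := by
                filter_upwards [hsand n] with ω h
                simp only [Pi.zero_apply]
                linarith
              have hmark := mul_meas_ge_le_integral_of_nonneg
                (μ := P n) (f := fun ω => X n ω - Y n ω) hDnn
                ((hXint n).sub (hYint n)) δ
              rw [hDmean n] at hmark
              have hfin : P n {ω | δ ≤ X n ω - Y n ω} ≠ ⊤ := measure_ne_top _ _
              calc P n {ω | δ < X n ω - Y n ω}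
                  ≤ P n {ω | δ ≤ X n ω - Y n ω} :=
                    measure_mono (fun ω (h : δ < X n ω - Y n ω) => (le_of_lt h : δ ≤ X n ω - Y n ω))
                _ = ENNReal.ofReal ((P n {ω | δ ≤ X n ω - Y n ω}).toReal) :=
                    (ENNReal.ofReal_toReal hfin).symm
                _ ≤ ENNReal.ofReal ((1 - ∫ ω, Y n ω ∂(P n)) / δ) := by
                    apply ENNReal.ofReal_le_ofReal
                    rw [le_div_iff₀ δpos]
                    calc (P n {ω | δ ≤ X n ω - Y n ω}).toReal * δ
                        = δ * (P n {ω | δ ≤ X n ω - Y n ω}).toReal := mul_comm _ _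
                      _ ≤ 1 - ∫ ω, Y n ω ∂(P n) := hmark
      refine le_trans h1 ?_
      refine ENNReal.le_of_forall_pos_le_add fun η ηpos hfin => ?_
      have hev : ∀ᶠ n in atTop,
          (νs n : Measure (ℝ × S)) (Gd k) ≤ (μs n : Measure (ℝ × S)) G + (η : ℝ≥0∞) := by
        have htend : Tendsto (fun n => (1 - ∫ ω, Y n ω ∂(P n)) / δ) atTop (𝓝 0) := by
          have := hεtend.div_const δ
          simpa using this
        have hev' : ∀ᶠ n in atTop, (1 - ∫ ω, Y n ω ∂(P n)) / δ < (η : ℝ) :=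
          htend.eventually_lt_const (by exact_mod_cast ηpos)
        filter_upwards [hev'] with n hn
        refine le_trans (h2 n) ?_
        gcongr
        calc ENNReal.ofReal ((1 - ∫ ω, Y n ω ∂(P n)) / δ)
            ≤ ENNReal.ofReal ((η : ℝ)) := ENNReal.ofReal_le_ofReal hn.le
          _ = (η : ℝ≥0∞) := ENNReal.ofReal_coe_nnreal
      calc atTop.liminf (fun n => (νs n : Measure (ℝ × S)) (Gd k))
          ≤ atTop.liminf (fun n => (μs n : Measure (ℝ × S)) G + (η : ℝ≥0∞)) :=
            liminf_le_liminf hev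
        _ = atTop.liminf (fun n => (μs n : Measure (ℝ × S)) G) + (η : ℝ≥0∞) := by
            apply liminf_add_const
            · exact IsBoundedUnder.isCoboundedUnder_ge ⟨⊤, Filter.Eventually.of_forall
                fun n => le_top⟩
            · exact ⟨0, Filter.Eventually.of_forall fun n => zero_le⟩
    calc (ν0 : Measure (ℝ × S)) G = (ν0 : Measure (ℝ × S)) (⋃ k, Gd k) := by rw [hGdUnion]
      _ = ⨆ k, (ν0 : Measure (ℝ × S)) (Gd k) :=
          (hGdmono.directed_le).measure_iUnion
      _ ≤ atTop.liminf (fun n => (μs n : Measure (ℝ × S)) G) := iSup_le key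
  -- convert to the ProbabilityMeasure (ℝ≥0) formulation
  have h_opens' : ∀ G : Set (ℝ × S), IsOpen G →
      ν0 G ≤ atTop.liminf (fun n => μs n G) := by
    intro G hG
    have h := h_opens G hG
    have aux : (↑(atTop.liminf (fun n => μs n G)) : ℝ≥0∞)
        = atTop.liminf (fun n => (↑(μs n G) : ℝ≥0∞)) := by
      refine Monotone.map_liminf_of_continuousAt (F := atTop) ENNReal.coe_mono
        (fun n => μs n G) ?_ ?_ ?_
      · exact ENNReal.continuous_coe.continuousAt
      · exact IsBoundedUnder.isCoboundedUnder_ge ⟨1, by simp⟩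
      · exact ⟨0, by simp⟩
    rw [← ENNReal.coe_le_coe, aux]
    simpa only [ProbabilityMeasure.ennreal_coeFn_eq_coeFn_toMeasure] using h
  have hμtend : Tendsto μs atTop (𝓝 ν0) :=
    MeasureTheory.tendsto_of_forall_isOpen_le_liminf h_opens'
  constructor
  · intro g
    have := ProbabilityMeasure.tendsto_iff_forall_integral_tendsto.mp hμtend g
    simpa only [hmapμ, hmapν0] using this
  · -- uniform integrability
    have htail : ∀ n, Tendsto (fun k : ℕ => ∫ ω in {ω | (k : ℝ) < X n ω}, X n ω ∂(P n))
        atTop (𝓝 0) := by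
      intro n
      have hsets : ∀ c : ℝ, MeasurableSet {ω | c < X n ω} :=
        fun c => measurableSet_lt measurable_const (hXmeas n)
      have hdom := tendsto_integral_of_dominated_convergence (μ := P n)
        (F := fun (k : ℕ) ω => Set.indicator {ω | (k : ℝ) < X n ω} (X n) ω)
        (f := fun _ => (0 : ℝ)) (bound := fun ω => |X n ω|)
        (fun k => ((hXmeas n).indicator (hsets (k : ℝ))).aestronglyMeasurable)
        (hXint n).abs
        (fun k => Filter.Eventually.of_forall fun ω =>
          norm_indicator_le_norm_self (X n) ω)
        (Filter.Eventually.of_forall fun ω => by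
          apply tendsto_atTop_of_eventually_const (i₀ := ⌈X n ω⌉₊)
          intro k hk
          apply Set.indicator_of_notMem
          simp only [Set.mem_setOf_eq, not_lt]
          exact (Nat.le_ceil _).trans (Nat.cast_le.mpr hk))
      simp only [integral_zero] at hdom
      exact hdom.congr fun k => integral_indicator (hsets (k : ℝ))
    have hclaim : ∀ n k : ℕ, (∫ ω in {ω | (2 * (k : ℝ)) < X n ω}, X n ω ∂(P n)) ≤
        2 * (1 - ∫ ω, Y n ω ∂(P n))
          + 2 * (1 - ∫ ω, min (max (Y n ω) 0) (k : ℝ) ∂(P n)) := by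
      intro n k
      have hset : MeasurableSet {ω | (2 * (k : ℝ)) < X n ω} :=
        measurableSet_lt measurable_const (hXmeas n)
      rw [← integral_indicator hset]
      have hle : ∀ᵐ ω ∂(P n), Set.indicator {ω | (2 * (k : ℝ)) < X n ω} (X n) ω ≤
          2 * (X n ω - Y n ω) + 2 * (Y n ω - min (max (Y n ω) 0) (k : ℝ)) := by
        filter_upwards [hsand n, hYnn n] with ω h1 h2
        rw [max_eq_left h2]
        have hm1 : min (Y n ω) (k : ℝ) ≤ (k : ℝ) := min_le_right _ _
        have hm2 : min (Y n ω) (k : ℝ) ≤ Y n ω := min_le_left _ _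
        by_cases hω : ω ∈ {ω | (2 * (k : ℝ)) < X n ω}
        · rw [Set.indicator_of_mem hω]
          have hω' : (2 * (k : ℝ)) < X n ω := hω
          linarith
        · rw [Set.indicator_of_notMem hω]
          linarith
      have hint2a : Integrable (fun ω => 2 * (X n ω - Y n ω)) (P n) := by
        exact ((hXint n).sub (hYint n)).const_mul 2
      have hint2b : Integrable
          (fun ω => 2 * (Y n ω - min (max (Y n ω) 0) (k : ℝ))) (P n) := by
        exact ((hYint n).sub (htruncint n (k : ℝ))).const_mul 2
      have hint2 : Integrable (fun ω => 2 * (X n ω - Y n ω)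
          + 2 * (Y n ω - min (max (Y n ω) 0) (k : ℝ))) (P n) := hint2a.add hint2b
      calc (∫ ω, Set.indicator {ω | (2 * (k : ℝ)) < X n ω} (X n) ω ∂(P n))
          ≤ ∫ ω, (2 * (X n ω - Y n ω)
              + 2 * (Y n ω - min (max (Y n ω) 0) (k : ℝ))) ∂(P n) :=
            integral_mono_ae ((hXint n).indicator hset) hint2 hle
        _ = 2 * (∫ ω, (X n ω - Y n ω) ∂(P n))
            + 2 * ((∫ ω, Y n ω ∂(P n)) - ∫ ω, min (max (Y n ω) 0) (k : ℝ) ∂(P n)) := by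
            rw [integral_add hint2a hint2b,
              integral_const_mul, integral_const_mul,
              integral_sub (hYint n) (htruncint n (k : ℝ))]
        _ ≤ _ := by
            rw [hDmean n]
            have := hEYle n
            linarith
    intro ε εpos
    obtain ⟨k₀, hk₀⟩ : ∃ k : ℕ, 1 - (∫ ω, min (max (Y' ω) 0) (k : ℝ) ∂Q) < ε / 8 := by
      have h0 : Tendsto (fun k : ℕ => 1 - ∫ ω, min (max (Y' ω) 0) (k : ℝ) ∂Q) atTop
          (𝓝 (1 - 1)) := tendsto_const_nhds.sub hT
      rw [sub_self] at h0
      exact (h0.eventually_lt_const (by linarith)).exists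
    obtain ⟨N1, hN1⟩ := Metric.tendsto_atTop.mp hεtend (ε / 8) (by linarith)
    obtain ⟨N2, hN2⟩ := Metric.tendsto_atTop.mp (hTk k₀) (ε / 8) (by linarith)
    set N := max N1 N2 with hNdef
    have hbig : ∀ n, N ≤ n → (∫ ω in {ω | (2 * (k₀ : ℝ)) < X n ω}, X n ω ∂(P n)) < ε := by
      intro n hn
      have h1 := hN1 n (le_trans (le_max_left _ _) hn)
      have h2 := hN2 n (le_trans (le_max_right _ _) hn)
      rw [Real.dist_eq, sub_zero, abs_lt] at h1
      rw [Real.dist_eq, abs_lt] at h2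
      obtain ⟨h1a, h1b⟩ := h1
      obtain ⟨h2a, h2b⟩ := h2
      refine lt_of_le_of_lt (hclaim n k₀) ?_
      linarith
    have hsmall : ∀ n, ∃ k : ℕ, (∫ ω in {ω | (k : ℝ) < X n ω}, X n ω ∂(P n)) < ε :=
      fun n => ((htail n).eventually_lt_const εpos).exists
    choose kk hkk using hsmall
    refine ⟨((max (2 * k₀) ((Finset.range N).sup kk) : ℕ) : ℝ), fun n => ?_⟩
    set K : ℕ := max (2 * k₀) ((Finset.range N).sup kk) with hKdef
    have hmono : ∀ a b : ℝ, a ≤ b →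
        (∫ ω in {ω | b < X n ω}, X n ω ∂(P n)) ≤ (∫ ω in {ω | a < X n ω}, X n ω ∂(P n)) := by
      intro a b hab
      apply setIntegral_mono_set ((hXint n).integrableOn) (ae_restrict_of_ae (hXnn n))
      exact Filter.Eventually.of_forall
        (fun ω (h : b < X n ω) => (lt_of_le_of_lt hab h : a < X n ω))
    rcases lt_or_ge n N with h | h
    · have hle1 : ((kk n : ℕ) : ℝ) ≤ (K : ℝ) :=
        Nat.cast_le.mpr (le_trans (Finset.le_sup (Finset.mem_range.mpr h)) (le_max_right _ _))
      exact lt_of_le_of_lt (hmono _ _ hle1) (hkk n)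
    · have hle2 : (2 * (k₀ : ℝ)) ≤ (K : ℝ) := by
        have h22 : ((2 * k₀ : ℕ) : ℝ) ≤ (K : ℝ) := Nat.cast_le.mpr (le_max_left _ _)
        push_cast at h22
        linarith
      exact lt_of_le_of_lt (hmono _ _ hle2) (hbig n h)
end
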